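/- Let p > 1 and q = p/(p−1). Let F be twice differentiable on an open interval containing [a,b] ⊆ [0,∞), a < b, F'' integrable, and suppose |F''|^q is (h-s)₂-convex on [a,b]. Then |(F'(a)+F'(b))/2 − (1/(b-a))·∫ₐᵇ F'(x) dx| ≤ ((b-a)/(2·(p+1)^(1/p)))·(K·(|F''(a)|^q + |F''(b)|^q))^(1/q), where K = ∫₀¹ h(t)^s dt. -/

import Mathlib

open Set intervalIntegral

lemma cont_abs_rpow (p : ℝ) (hp : 0 < p) : Continuous (fun u : ℝ => |u| ^ p) :=
  continuous_abs.rpow_const (fun x => Or.inr hp.le)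

lemma integral_abs_one_sub_two_mul (p : ℝ) (hp : 1 < p) :
    ∫ t in (0:ℝ)..1, |1 - 2*t| ^ p = 1 / (p + 1) := by
  have hp0 : 0 < p := by linarith
  have hcont := cont_abs_rpow p hp0
  have h1 : (∫ t in (0:ℝ)..1, |(-2)*t + 1| ^ p)
      = (-2 : ℝ)⁻¹ • ∫ u in (1:ℝ)..(-1), |u| ^ p := by
    have := intervalIntegral.integral_comp_mul_add (a := (0:ℝ)) (b := 1)
      (fun u => |u| ^ p) (by norm_num : (-2:ℝ) ≠ 0) 1
    norm_num at this ⊢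
    convert this using 2 <;> ring
  have h2 : (∫ u in (-1:ℝ)..0, |u| ^ p) = ∫ u in (0:ℝ)..1, |u| ^ p := by
    have := intervalIntegral.integral_comp_neg (a := (0:ℝ)) (b := 1) (fun u => |u| ^ p)
    simpa [abs_neg] using this.symm
  have h3 : (∫ u in (0:ℝ)..1, |u| ^ p) = 1 / (p + 1) := by
    have : (∫ u in (0:ℝ)..1, |u| ^ p) = ∫ u in (0:ℝ)..1, u ^ p := by
      apply intervalIntegral.integral_congr
      intro u hu
      rw [uIcc_of_le (by norm_num : (0:ℝ) ≤ 1)] at hu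
      simp [abs_of_nonneg hu.1]
    rw [this, integral_rpow (Or.inl (by linarith))]
    rw [Real.zero_rpow (by linarith), Real.one_rpow]
    ring
  have h4 : (∫ u in (-1:ℝ)..1, |u| ^ p) = 2 / (p + 1) := by
    rw [← intervalIntegral.integral_add_adjacent_intervals
      (a := (-1:ℝ)) (b := 0) (c := 1)
      (hcont.intervalIntegrable _ _) (hcont.intervalIntegrable _ _), h2, h3]
    ring
  calc ∫ t in (0:ℝ)..1, |1 - 2*t| ^ p
      = ∫ t in (0:ℝ)..1, |(-2)*t + 1| ^ p := by
        apply intervalIntegral.integral_congr; intro t _; ring_nf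
    _ = (-2 : ℝ)⁻¹ • ∫ u in (1:ℝ)..(-1), |u| ^ p := h1
    _ = (2 : ℝ)⁻¹ • ∫ u in (-1:ℝ)..1, |u| ^ p := by
        rw [intervalIntegral.integral_symm]; simp
    _ = 1 / (p + 1) := by rw [h4, smul_eq_mul]; field_simp

theorem trapezoid_ineq_holder_hs2 (h : ℝ → ℝ) (s p q : ℝ)
    (F F' F'' : ℝ → ℝ) (I : Set ℝ) (a b : ℝ)
    (hh_nonneg : ∀ t, 0 ≤ h t) (hh_ne : ∃ t, h t ≠ 0) (hs : s ∈ Ioc (0:ℝ) 1)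
    (hp : 1 < p) (hq : q = p / (p - 1))
    (hh_int : IntervalIntegrable (fun t => h t ^ s) MeasureTheory.volume 0 1)
    (hI : IsOpen I) (ha : 0 ≤ a) (hab : a < b) (hsub : Icc a b ⊆ I)
    (hF' : ∀ x ∈ I, HasDerivAt F (F' x) x)
    (hF'' : ∀ x ∈ I, HasDerivAt F' (F'' x) x)
    (hint : IntervalIntegrable F'' MeasureTheory.volume a b)
    -- |F''|^q is (h-s)₂-convex on [a,b]
    (hconv : ∀ t ∈ Icc (0:ℝ) 1,
      |F'' (t * a + (1 - t) * b)| ^ q ≤ h t ^ s * |F'' a| ^ q + h (1 - t) ^ s * |F'' b| ^ q) :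
    |(F' a + F' b) / 2 - (1 / (b - a)) * ∫ x in a..b, F' x| ≤
      ((b - a) / (2 * (p + 1) ^ (1 / p))) *
        ((∫ t in (0:ℝ)..1, h t ^ s) * (|F'' a| ^ q + |F'' b| ^ q)) ^ (1 / q) := by
  have hba : (0:ℝ) < b - a := by linarith
  have hba' : a - b ≠ 0 := by intro hce; apply absurd hce; intro hc; linarith [hab]
  have hq1 : 1 < q := by
    rw [hq]; rw [lt_div_iff₀ (by linarith)]; linarith
  have hq0 : 0 < q := by linarith
  -- x(t) := t*a + (1-t)*b lies in [a,b] for t ∈ [0,1]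
  have hmem : ∀ t ∈ Icc (0:ℝ) 1, t * a + (1 - t) * b ∈ Icc a b := by
    intro t ht
    constructor <;> nlinarith [ht.1, ht.2, hab.le]
  -- integrability of t ↦ F''(x t) on [0,1]
  have hint2 : IntervalIntegrable (fun t => F'' (t * a + (1 - t) * b))
      MeasureTheory.volume 0 1 := by
    have h1 : IntervalIntegrable (fun x => F'' (x + b)) MeasureTheory.volume (a - b) 0 := by
      simpa using hint.comp_add_right b
    have h2 : IntervalIntegrable (fun x => F'' ((a - b) * x + b)) MeasureTheory.volume
        ((a - b)/(a - b)) (0/(a - b)) := h1.comp_mul_left (c := a - b)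
    rw [div_self hba', zero_div] at h2
    have h3 := h2.symm
    have heq : (fun x : ℝ => F'' ((a - b) * x + b)) = (fun t => F'' (t * a + (1 - t) * b)) :=
      funext fun t => by rw [show (a - b) * t + b = t * a + (1 - t) * b by ring]
    rwa [heq] at h3
  -- the trapezoid identity
  have hiden : (F' a + F' b) / 2 - (1 / (b - a)) * ∫ x in a..b, F' x
      = ((b - a) / 2) * ∫ t in (0:ℝ)..1, (1 - 2*t) * F'' (t * a + (1 - t) * b) := by
    have hu : ∀ t ∈ uIcc (0:ℝ) 1, HasDerivAt (fun t : ℝ => 1 - 2*t) (-2) t := by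
      intro t _
      simpa using ((hasDerivAt_id t).const_mul (2:ℝ)).const_sub 1
    have hv : ∀ t ∈ uIcc (0:ℝ) 1,
        HasDerivAt (fun t : ℝ => F' (t * a + (1 - t) * b))
          ((a - b) * F'' (t * a + (1 - t) * b)) t := by
      intro t ht
      rw [uIcc_of_le (by norm_num : (0:ℝ) ≤ 1)] at ht
      have hx : HasDerivAt (fun t : ℝ => t * a + (1 - t) * b) (a - b) t := by
        have : HasDerivAt (fun t : ℝ => (a - b) * t + b) (a - b) t := by
          simpa using ((hasDerivAt_id t).const_mul (a - b)).add_const b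
        have heq : (fun t : ℝ => (a - b) * t + b) = (fun t : ℝ => t * a + (1 - t) * b) :=
          funext fun t => by ring
        rwa [heq] at this
      have hFd := hF'' _ (hsub (hmem t ht))
      simpa [mul_comm, Function.comp_def] using hFd.comp t hx
    have hIBP := intervalIntegral.integral_mul_deriv_eq_deriv_mul hu hv
      (intervalIntegrable_const (c := -2))
      (hint2.const_mul (a - b))
    have hsub1 : (∫ t in (0:ℝ)..1, F' (t * a + (1 - t) * b))
        = (b - a)⁻¹ * ∫ x in a..b, F' x := by
      have heq : (fun t : ℝ => F' (t * a + (1 - t) * b))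
          = (fun t : ℝ => F' ((a - b) * t + b)) := funext fun t => by ring_nf
      rw [heq]
      have := intervalIntegral.integral_comp_mul_add (a := (0:ℝ)) (b := 1) F' hba' b
      rw [this]
      rw [intervalIntegral.integral_symm]
      norm_num
      rw [← neg_mul, ← inv_neg, neg_sub]
    have hpull : (∫ t in (0:ℝ)..1, (1 - 2*t) * ((a - b) * F'' (t * a + (1 - t) * b)))
        = (a - b) * ∫ t in (0:ℝ)..1, (1 - 2*t) * F'' (t * a + (1 - t) * b) := by
      rw [← intervalIntegral.integral_const_mul]
      apply intervalIntegral.integral_congr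
      intro t _; ring
    have hpull2 : (∫ t in (0:ℝ)..1, (-2 : ℝ) * F' (t * a + (1 - t) * b))
        = (-2) * ∫ t in (0:ℝ)..1, F' (t * a + (1 - t) * b) :=
      intervalIntegral.integral_const_mul _ _
    rw [hpull, hpull2, hsub1] at hIBP
    norm_num at hIBP
    linear_combination (1/2 : ℝ) * hIBP
  -- notation
  set μ := MeasureTheory.volume.restrict (Set.Ioc (0:ℝ) 1) with hμ
  set A := |F'' a| ^ q with hA
  set B := |F'' b| ^ q with hB
  set K := ∫ t in (0:ℝ)..1, h t ^ s with hK
  have hfin : MeasureTheory.IsFiniteMeasure μ := by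
    constructor
    rw [hμ, MeasureTheory.Measure.restrict_apply_univ]
    exact measure_Ioc_lt_top
  -- measurability of g t = |F''(x t)|
  have haff : Measurable (fun t : ℝ => t * a + (1 - t) * b) := by fun_prop
  have hgm : MeasureTheory.AEStronglyMeasurable
      (fun t => |F'' (t * a + (1 - t) * b)|) μ := by
    have hdm : Measurable (deriv F') := measurable_deriv F'
    have hae : (fun t => deriv F' (t * a + (1 - t) * b))
        =ᵐ[μ] (fun t => F'' (t * a + (1 - t) * b)) := by
      rw [hμ]
      refine (MeasureTheory.ae_restrict_iff' measurableSet_Ioc).mpr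
        (Filter.Eventually.of_forall ?_)
      intro t ht
      exact ((hF'' _ (hsub (hmem t ⟨ht.1.le, ht.2⟩))).deriv)
    exact (continuous_abs.comp_aestronglyMeasurable
      (((hdm.comp haff).aestronglyMeasurable).congr hae))
  have hgqm : MeasureTheory.AEStronglyMeasurable
      (fun t => |F'' (t * a + (1 - t) * b)| ^ q) μ :=
    (Real.continuous_rpow_const hq0.le).comp_aestronglyMeasurable hgm
  -- integrability of the dominating function
  have hh2 : IntervalIntegrable (fun t => h (1 - t) ^ s) MeasureTheory.volume 0 1 := by
    have := (hh_int.comp_sub_left 1).symm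
    norm_num at this
    exact this
  have hD : MeasureTheory.Integrable (fun t => h t ^ s * A + h (1 - t) ^ s * B) μ :=
    (hh_int.1.mul_const A).add (hh2.1.mul_const B)
  -- pointwise bound a.e.
  have hbound : ∀ᵐ t ∂μ, |F'' (t * a + (1 - t) * b)| ^ q
      ≤ h t ^ s * A + h (1 - t) ^ s * B := by
    rw [hμ]
    refine (MeasureTheory.ae_restrict_iff' measurableSet_Ioc).mpr
      (Filter.Eventually.of_forall ?_)
    intro t ht
    exact hconv t ⟨ht.1.le, ht.2⟩
  have hgq_int : MeasureTheory.Integrable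
      (fun t => |F'' (t * a + (1 - t) * b)| ^ q) μ := by
    refine hD.mono' hgqm ?_
    filter_upwards [hbound] with t ht
    rwa [Real.norm_eq_abs, abs_of_nonneg (Real.rpow_nonneg (abs_nonneg _) q)]
  -- Memℒp for Hölder
  have hq_ne0 : (ENNReal.ofReal q) ≠ 0 := by
    simp only [ne_eq, ENNReal.ofReal_eq_zero, not_le]; exact hq0
  have hMg : MeasureTheory.MemLp (fun t => |F'' (t * a + (1 - t) * b)|)
      (ENNReal.ofReal q) μ := by
    rw [← MeasureTheory.memLp_norm_rpow_iff hgm hq_ne0 ENNReal.ofReal_ne_top,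
      ENNReal.div_self hq_ne0 ENNReal.ofReal_ne_top,
      MeasureTheory.memLp_one_iff_integrable]
    simpa [Real.norm_eq_abs, abs_abs, ENNReal.toReal_ofReal hq0.le] using hgq_int
  have hMf : MeasureTheory.MemLp (fun t : ℝ => |1 - 2*t|) (ENNReal.ofReal p) μ := by
    refine MeasureTheory.MemLp.of_bound
      ((continuous_const.sub (continuous_const.mul continuous_id)).abs.aestronglyMeasurable) 1 ?_
    rw [hμ]
    refine (MeasureTheory.ae_restrict_iff' measurableSet_Ioc).mpr
      (Filter.Eventually.of_forall ?_)
    intro t ht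
    rw [Real.norm_eq_abs, abs_abs, abs_le]
    constructor <;> [linarith [ht.2]; linarith [ht.1.le]]
  -- Hölder
  have hpq : p.HolderConjugate q := (Real.holderConjugate_iff_eq_conjExponent hp).2 hq
  have hHolder := MeasureTheory.integral_mul_le_Lp_mul_Lq_of_nonneg hpq
    (MeasureTheory.ae_of_all μ fun t => abs_nonneg (1 - 2*t))
    (MeasureTheory.ae_of_all μ fun t => abs_nonneg _) hMf hMg
  -- compute ∫ |1-2t|^p
  have hfp : (∫ t, |1 - 2*t| ^ p ∂μ) = 1 / (p + 1) := by
    rw [← integral_abs_one_sub_two_mul p hp,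
      intervalIntegral.integral_of_le (zero_le_one), hμ]
  -- monotonicity step: ∫ g^q ≤ K * (A + B)
  have hKeq : (∫ t, h t ^ s ∂μ) = K := by
    rw [hK, intervalIntegral.integral_of_le zero_le_one, hμ]
  have hKeq2 : (∫ t, h (1 - t) ^ s ∂μ) = K := by
    have := intervalIntegral.integral_comp_sub_left (a := (0:ℝ)) (b := 1)
      (fun u => h u ^ s) 1
    norm_num at this
    rw [hμ, ← intervalIntegral.integral_of_le zero_le_one, this, hK]
  have hmono2 : (∫ t, |F'' (t * a + (1 - t) * b)| ^ q ∂μ) ≤ K * (A + B) := by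
    have h1 : (∫ t, |F'' (t * a + (1 - t) * b)| ^ q ∂μ)
        ≤ ∫ t, (h t ^ s * A + h (1 - t) ^ s * B) ∂μ :=
      MeasureTheory.integral_mono_ae hgq_int hD hbound
    have h2 : (∫ t, (h t ^ s * A + h (1 - t) ^ s * B) ∂μ)
        = (∫ t, h t ^ s ∂μ) * A + (∫ t, h (1 - t) ^ s ∂μ) * B := by
      rw [MeasureTheory.integral_add (hh_int.1.mul_const A) (hh2.1.mul_const B),
        MeasureTheory.integral_mul_const, MeasureTheory.integral_mul_const]
    rw [h2, hKeq, hKeq2] at h1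
    calc (∫ t, |F'' (t * a + (1 - t) * b)| ^ q ∂μ) ≤ K * A + K * B := h1
      _ = K * (A + B) := by ring
  -- first step: abs of integral
  have hS : |∫ t in (0:ℝ)..1, (1 - 2*t) * F'' (t * a + (1 - t) * b)|
      ≤ ∫ t, |1 - 2*t| * |F'' (t * a + (1 - t) * b)| ∂μ := by
    rw [intervalIntegral.integral_of_le zero_le_one, hμ]
    have h1 : |∫ t, (1 - 2*t) * F'' (t * a + (1 - t) * b)
        ∂MeasureTheory.volume.restrict (Set.Ioc (0:ℝ) 1)|
        ≤ ∫ t, ‖(1 - 2*t) * F'' (t * a + (1 - t) * b)‖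
        ∂MeasureTheory.volume.restrict (Set.Ioc (0:ℝ) 1) := by
      rw [← Real.norm_eq_abs]
      exact MeasureTheory.norm_integral_le_integral_norm _
    refine h1.trans (le_of_eq ?_)
    congr 1 with t
    rw [Real.norm_eq_abs, abs_mul]
  -- nonnegativity facts
  have hAB : 0 ≤ K * (A + B) := by
    have hK0 : 0 ≤ K := by
      rw [hK]
      apply intervalIntegral.integral_nonneg zero_le_one
      intro u _
      exact Real.rpow_nonneg (hh_nonneg u) s
    have : (0:ℝ) ≤ A + B := by positivity
    positivity
  have hint_nonneg : 0 ≤ ∫ t, |F'' (t * a + (1 - t) * b)| ^ q ∂μ :=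
    MeasureTheory.integral_nonneg fun t => Real.rpow_nonneg (abs_nonneg _) q
  -- combine Hölder with monotonicity
  have hfinal : (∫ t, |1 - 2*t| * |F'' (t * a + (1 - t) * b)| ∂μ)
      ≤ (1 / (p + 1)) ^ (1/p) * (K * (A + B)) ^ (1/q) := by
    refine hHolder.trans ?_
    rw [hfp]
    exact mul_le_mul_of_nonneg_left
      (Real.rpow_le_rpow hint_nonneg hmono2 (by positivity)) (by positivity)
  -- assemble
  rw [hiden, abs_mul, abs_of_nonneg (by positivity : (0:ℝ) ≤ (b - a) / 2)]
  have hfin2 : (b - a) / 2 * |∫ t in (0:ℝ)..1, (1 - 2*t) * F'' (t * a + (1 - t) * b)|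
      ≤ (b - a) / 2 * ((1 / (p + 1)) ^ (1/p) * (K * (A + B)) ^ (1/q)) :=
    mul_le_mul_of_nonneg_left (hS.trans hfinal) (by positivity)
  refine hfin2.trans (le_of_eq ?_)
  have hpp : (0:ℝ) < (p + 1) ^ (1/p) := Real.rpow_pos_of_pos (by linarith) _
  rw [one_div (p+1), Real.inv_rpow (by linarith)]
  field_simp
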